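/- Semi-dominant energy inequality for g^cₙ: let m ∈ ℕ, c > 0, and Λ ∈ ℝ with c² ≥ 4·Λ. Then for all v₀, v₁, v₂ ∈ ℝ and v̂ ∈ ℝᵐ with v₀² ≥ v₁² + v₂² + ‖v̂‖², one has ((3/4)·c² − Λ)²·v₀² ≥ ((1/4)·c² + Λ)²·(v₁² + v₂²) + ((1/4)·c² − Λ)²·‖v̂‖². -/
import Mathlib

/-- semi-dominant energy inequality for `g^cₙ`. In the orthonormal
frame `(e₀,…,e_{n−1})`, the energy-momentum tensor of `g^cₙ` is
`diag((3/4)c² − Λ, (1/4)c² + Λ, (1/4)c² + Λ, 0, …, 0)`; this inequality says that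
`−♯T(v,·)` is causal for every timelike `v = v₀e₀+v₁e₁+v₂e₂+v̂` when `c² ≥ 4Λ`. -/
theorem stmt_13 (m : ℕ) (c Λ : ℝ) (hc : 0 < c) (hΛ : c^2 ≥ 4 * Λ)
    (v₀ v₁ v₂ : ℝ) (vh : EuclideanSpace ℝ (Fin m))
    (htl : v₀^2 ≥ v₁^2 + v₂^2 + ‖vh‖^2) :
    (3/4 * c^2 - Λ)^2 * v₀^2 ≥
      (1/4 * c^2 + Λ)^2 * (v₁^2 + v₂^2) + (1/4 * c^2 - Λ)^2 * ‖vh‖^2 := by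
  have h1 : (0:ℝ) ≤ ‖vh‖^2 := sq_nonneg _
  have h2 : (0:ℝ) ≤ v₁^2 + v₂^2 := by positivity
  have key1 : (3/4 * c^2 - Λ)^2 - (1/4 * c^2 + Λ)^2 = c^2 * (1/2 * c^2 - 2*Λ) := by ring
  have key2 : (3/4 * c^2 - Λ)^2 - (1/4 * c^2 - Λ)^2 = 1/2 * c^2 * (c^2 - 2*Λ) := by ring
  have ha : (3/4 * c^2 - Λ)^2 ≥ (1/4 * c^2 + Λ)^2 := by nlinarith [sq_nonneg c]
  have hb : (3/4 * c^2 - Λ)^2 ≥ (1/4 * c^2 - Λ)^2 := by nlinarith [sq_nonneg c]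
  nlinarith [mul_le_mul_of_nonneg_left htl.le (sq_nonneg (3/4 * c^2 - Λ)),
    mul_le_mul_of_nonneg_right ha h2, mul_le_mul_of_nonneg_right hb h1]
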